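/- A bounded linear operator T on a complex Banach space belongs to class (aw_e) if and only if T belongs to class (W_e) and E^0(T) = E_a^0(T). -/

import Mathlib

open Filter Topology
set_option maxHeartbeats 1000000

variable {X : Type*} [NormedAddCommGroup X] [NormedSpace ℂ X] [CompleteSpace X]

/-- `S` is a Fredholm operator. -/
def IsFredholm (S : X →L[ℂ] X) : Prop :=
  FiniteDimensional ℂ (LinearMap.ker (S : X →ₗ[ℂ] X)) ∧
  IsClosed ((LinearMap.range (S : X →ₗ[ℂ] X) : Submodule ℂ X) : Set X) ∧
  FiniteDimensional ℂ (X ⧸ LinearMap.range (S : X →ₗ[ℂ] X))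

/-- `S` is a Weyl operator: Fredholm of index zero. -/
def IsWeyl (S : X →L[ℂ] X) : Prop :=
  IsFredholm S ∧
  Module.finrank ℂ (LinearMap.ker (S : X →ₗ[ℂ] X)) = Module.finrank ℂ (X ⧸ LinearMap.range (S : X →ₗ[ℂ] X))

/-- `S` is a B-Fredholm operator: for some `n`, `R(S^n)` is closed and the restriction
`S_[n] : R(S^n) → R(S^n)` is Fredholm (its kernel is `ker S ⊓ R(S^n)`, its range is
`R(S^(n+1))`). -/
def IsBFredholm (S : X →L[ℂ] X) : Prop :=
  ∃ n : ℕ, IsClosed ((LinearMap.range ((S ^ n : X →L[ℂ] X) : X →ₗ[ℂ] X) : Submodule ℂ X) : Set X) ∧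
    IsClosed ((LinearMap.range ((S ^ (n + 1) : X →L[ℂ] X) : X →ₗ[ℂ] X) : Submodule ℂ X) : Set X) ∧
    FiniteDimensional ℂ ↥(LinearMap.ker (S : X →ₗ[ℂ] X) ⊓ LinearMap.range ((S ^ n : X →L[ℂ] X) : X →ₗ[ℂ] X)) ∧
    FiniteDimensional ℂ (↥(LinearMap.range ((S ^ n : X →L[ℂ] X) : X →ₗ[ℂ] X)) ⧸
      Submodule.comap (LinearMap.range ((S ^ n : X →L[ℂ] X) : X →ₗ[ℂ] X)).subtype (LinearMap.range ((S ^ (n + 1) : X →L[ℂ] X) : X →ₗ[ℂ] X)))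

/-- `S` is a B-Weyl operator: B-Fredholm of index zero. -/
def IsBWeyl (S : X →L[ℂ] X) : Prop :=
  ∃ n : ℕ, IsClosed ((LinearMap.range ((S ^ n : X →L[ℂ] X) : X →ₗ[ℂ] X) : Submodule ℂ X) : Set X) ∧
    IsClosed ((LinearMap.range ((S ^ (n + 1) : X →L[ℂ] X) : X →ₗ[ℂ] X) : Submodule ℂ X) : Set X) ∧
    FiniteDimensional ℂ ↥(LinearMap.ker (S : X →ₗ[ℂ] X) ⊓ LinearMap.range ((S ^ n : X →L[ℂ] X) : X →ₗ[ℂ] X)) ∧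
    FiniteDimensional ℂ (↥(LinearMap.range ((S ^ n : X →L[ℂ] X) : X →ₗ[ℂ] X)) ⧸
      Submodule.comap (LinearMap.range ((S ^ n : X →L[ℂ] X) : X →ₗ[ℂ] X)).subtype (LinearMap.range ((S ^ (n + 1) : X →L[ℂ] X) : X →ₗ[ℂ] X))) ∧
    Module.finrank ℂ ↥(LinearMap.ker (S : X →ₗ[ℂ] X) ⊓ LinearMap.range ((S ^ n : X →L[ℂ] X) : X →ₗ[ℂ] X)) =
      Module.finrank ℂ (↥(LinearMap.range ((S ^ n : X →L[ℂ] X) : X →ₗ[ℂ] X)) ⧸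
        Submodule.comap (LinearMap.range ((S ^ n : X →L[ℂ] X) : X →ₗ[ℂ] X)).subtype (LinearMap.range ((S ^ (n + 1) : X →L[ℂ] X) : X →ₗ[ℂ] X)))

/-- `S` has finite ascent. -/
def HasFiniteAscent (S : X →L[ℂ] X) : Prop :=
  ∃ n : ℕ, LinearMap.ker ((S ^ n : X →L[ℂ] X) : X →ₗ[ℂ] X) = LinearMap.ker ((S ^ (n + 1) : X →L[ℂ] X) : X →ₗ[ℂ] X)

/-- `S` has finite descent. -/
def HasFiniteDescent (S : X →L[ℂ] X) : Prop :=
  ∃ n : ℕ, LinearMap.range ((S ^ n : X →L[ℂ] X) : X →ₗ[ℂ] X) = LinearMap.range ((S ^ (n + 1) : X →L[ℂ] X) : X →ₗ[ℂ] X)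

/-- The approximate point spectrum of `T`: points `λ` where `T - λ` is not bounded below. -/
def sigma_a (T : X →L[ℂ] X) : Set ℂ :=
  {l : ℂ | ¬ ∃ c > (0 : ℝ), ∀ x : X, c * ‖x‖ ≤ ‖(T - l • 1) x‖}

/-- The essential spectrum of `T`. -/
def sigma_e (T : X →L[ℂ] X) : Set ℂ := {l : ℂ | ¬ IsFredholm (T - l • 1)}

/-- The Weyl spectrum of `T`. -/
def sigma_w (T : X →L[ℂ] X) : Set ℂ := {l : ℂ | ¬ IsWeyl (T - l • 1)}

/-- The B-Fredholm spectrum of `T`. -/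
def sigma_bf (T : X →L[ℂ] X) : Set ℂ := {l : ℂ | ¬ IsBFredholm (T - l • 1)}

/-- The B-Weyl spectrum of `T`. -/
def sigma_bw (T : X →L[ℂ] X) : Set ℂ := {l : ℂ | ¬ IsBWeyl (T - l • 1)}

/-- The poles of the resolvent of `T`: spectral points with finite ascent and descent. -/
def poles (T : X →L[ℂ] X) : Set ℂ :=
  {l : ℂ | l ∈ spectrum ℂ T ∧ HasFiniteAscent (T - l • 1) ∧ HasFiniteDescent (T - l • 1)}

/-- The poles of `T` of finite rank. -/
def poles0 (T : X →L[ℂ] X) : Set ℂ :=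
  {l : ℂ | l ∈ poles T ∧ FiniteDimensional ℂ (LinearMap.ker ((T - l • 1 : X →L[ℂ] X) : X →ₗ[ℂ] X))}

/-- The left poles of `T`: points `λ ∈ σ_a(T)` with `p = p(T-λ) < ∞` and `R((T-λ)^(p+1))`
closed. -/
def leftPoles (T : X →L[ℂ] X) : Set ℂ :=
  {l : ℂ | l ∈ sigma_a T ∧ ∃ p : ℕ,
    LinearMap.ker (((T - l • 1) ^ p : X →L[ℂ] X) : X →ₗ[ℂ] X) = LinearMap.ker (((T - l • 1) ^ (p + 1) : X →L[ℂ] X) : X →ₗ[ℂ] X) ∧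
    (∀ m : ℕ, m < p → LinearMap.ker (((T - l • 1) ^ m : X →L[ℂ] X) : X →ₗ[ℂ] X) ≠ LinearMap.ker (((T - l • 1) ^ (m + 1) : X →L[ℂ] X) : X →ₗ[ℂ] X)) ∧
    IsClosed ((LinearMap.range (((T - l • 1) ^ (p + 1) : X →L[ℂ] X) : X →ₗ[ℂ] X) : Submodule ℂ X) : Set X)}

/-- The left poles of `T` of finite rank. -/
def leftPoles0 (T : X →L[ℂ] X) : Set ℂ :=
  {l : ℂ | l ∈ leftPoles T ∧ FiniteDimensional ℂ (LinearMap.ker ((T - l • 1 : X →L[ℂ] X) : X →ₗ[ℂ] X))}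

/-- The isolated points of a subset of `ℂ`. -/
def isoPts (A : Set ℂ) : Set ℂ := {l : ℂ | l ∈ A ∧ ¬ AccPt l (𝓟 A)}

/-- `E(T)`: isolated spectral points that are eigenvalues. -/
def Eset (T : X →L[ℂ] X) : Set ℂ :=
  {l : ℂ | l ∈ isoPts (spectrum ℂ T) ∧ LinearMap.ker ((T - l • 1 : X →L[ℂ] X) : X →ₗ[ℂ] X) ≠ ⊥}

/-- `E⁰(T)`: isolated spectral points that are eigenvalues of finite multiplicity. -/
def Eset0 (T : X →L[ℂ] X) : Set ℂ :=
  {l : ℂ | l ∈ isoPts (spectrum ℂ T) ∧ LinearMap.ker ((T - l • 1 : X →L[ℂ] X) : X →ₗ[ℂ] X) ≠ ⊥ ∧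
    FiniteDimensional ℂ (LinearMap.ker ((T - l • 1 : X →L[ℂ] X) : X →ₗ[ℂ] X))}

/-- `E_a(T)`: isolated points of the approximate point spectrum that are eigenvalues. -/
def Ea (T : X →L[ℂ] X) : Set ℂ :=
  {l : ℂ | l ∈ isoPts (sigma_a T) ∧ LinearMap.ker ((T - l • 1 : X →L[ℂ] X) : X →ₗ[ℂ] X) ≠ ⊥}

/-- `E_a⁰(T)`: isolated points of `σ_a(T)` that are eigenvalues of finite multiplicity. -/
def Ea0 (T : X →L[ℂ] X) : Set ℂ :=
  {l : ℂ | l ∈ isoPts (sigma_a T) ∧ LinearMap.ker ((T - l • 1 : X →L[ℂ] X) : X →ₗ[ℂ] X) ≠ ⊥ ∧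
    FiniteDimensional ℂ (LinearMap.ker ((T - l • 1 : X →L[ℂ] X) : X →ₗ[ℂ] X))}

/-- closed + finite-dimensional subspaces have closed sup -/
lemma isClosed_sup_fd (R₀ F₀ : Submodule ℂ X) (hR : IsClosed (R₀ : Set X))
    [FiniteDimensional ℂ F₀] : IsClosed ((R₀ ⊔ F₀ : Submodule ℂ X) : Set X) := by
  haveI : IsClosed (R₀ : Set X) := hR
  have hcont : Continuous R₀.mkQ := by
    exact continuous_quot_mk
  have key : ((R₀ ⊔ F₀ : Submodule ℂ X) : Set X) =
      R₀.mkQ ⁻¹' ((F₀.map R₀.mkQ : Submodule ℂ (X ⧸ R₀)) : Set (X ⧸ R₀)) := by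
    rw [← Submodule.comap_map_mkQ]
    rfl
  rw [key]
  haveI : FiniteDimensional ℂ (F₀.map R₀.mkQ) := Module.Finite.map _ _
  exact IsClosed.preimage hcont (Submodule.closed_of_finiteDimensional _)

theorem fredholm_stability (S : X →L[ℂ] X) (hS : IsFredholm S) :
    ∃ ε > 0, ∀ E : X →L[ℂ] X, ‖E‖ < ε → IsFredholm (S + E) := by
  obtain ⟨hker, hcl, hquot⟩ := hS
  obtain ⟨M, hMcl, hNM⟩ :=
    (Submodule.ClosedComplemented.of_finiteDimensional (LinearMap.ker (S : X →ₗ[ℂ] X))).exists_isClosed_isCompl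
  obtain ⟨F, hRF⟩ := (LinearMap.range (S : X →ₗ[ℂ] X)).exists_isCompl
  haveI : FiniteDimensional ℂ F :=
    (Submodule.quotientEquivOfIsCompl _ _ hRF).finiteDimensional
  haveI : CompleteSpace M := hMcl.completeSpace_coe
  haveI : CompleteSpace F := FiniteDimensional.complete ℂ F
  haveI : FiniteDimensional ℂ (X ⧸ M) :=
    (Submodule.quotientEquivOfIsCompl M (LinearMap.ker (S : X →ₗ[ℂ] X)) hNM.symm).symm.finiteDimensional
  -- J : M × F → X, (m,f) ↦ S m + f, an isomorphism
  set J : (M × F) →L[ℂ] X := (S.comp M.subtypeL).coprod F.subtypeL with hJ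
  have hJapp : ∀ (m : M) (f : F), J (m, f) = S m + f := fun m f => rfl
  have hJker : LinearMap.ker (J : (M × F) →ₗ[ℂ] X) = ⊥ := by
    rw [Submodule.eq_bot_iff]
    rintro ⟨m, f⟩ hmf
    have h0 : S (m : X) + (f : X) = 0 := hmf
    have hSm : S (m : X) ∈ F := by
      have he : S (m : X) = -(f : X) := eq_neg_of_add_eq_zero_left h0
      rw [he]; exact F.neg_mem f.2
    have hSm0 : S (m : X) = 0 := by
      have := hRF.disjoint.le_bot (Submodule.mem_inf.2 ⟨LinearMap.mem_range_self _ _, hSm⟩)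
      simpa using this
    have hf0 : (f : X) = 0 := by rw [hSm0, zero_add] at h0; exact h0
    have hm0 : (m : X) = 0 := by
      have hmk : (m : X) ∈ LinearMap.ker (S : X →ₗ[ℂ] X) := hSm0
      have := hNM.disjoint.le_bot (Submodule.mem_inf.2 ⟨hmk, m.2⟩)
      simpa using this
    ext <;> simp [hm0, hf0]
  have hJrange : LinearMap.range (J : (M × F) →ₗ[ℂ] X) = ⊤ := by
    rw [LinearMap.range_eq_top]
    intro x
    have hx : x ∈ LinearMap.range (S : X →ₗ[ℂ] X) ⊔ F := by rw [hRF.sup_eq_top]; trivial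
    obtain ⟨r, hr, f, hf, hrf⟩ := Submodule.mem_sup.1 hx
    obtain ⟨y, hy⟩ := hr
    have hy2 : y ∈ (LinearMap.ker (S : X →ₗ[ℂ] X)) ⊔ M := by rw [hNM.sup_eq_top]; trivial
    obtain ⟨n, hn, m, hm, hnm⟩ := Submodule.mem_sup.1 hy2
    refine ⟨(⟨m, hm⟩, ⟨f, hf⟩), ?_⟩
    have : S m = r := by
      have : S y = r := hy
      rw [← hnm] at this
      simpa [map_add, show S n = 0 from LinearMap.mem_ker.1 hn] using this
    simp [hJapp, this, hrf]
  set e := ContinuousLinearEquiv.ofBijective J hJker hJrange with he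
  have hecoe : ∀ p, e p = J p := fun p => rfl
  set ε : ℝ := (‖(e.symm : X →L[ℂ] (M × F))‖ + 1)⁻¹ with hε
  have hεpos : 0 < ε := by positivity
  refine ⟨ε, hεpos, fun E hE => ?_⟩
  set Δ : (M × F) →L[ℂ] X := (E.comp M.subtypeL).coprod 0 with hΔ
  have hΔapp : ∀ p : M × F, Δ p = E (p.1 : X) := by
    intro p; simp [hΔ]
  have hΔnorm : ‖Δ‖ ≤ ‖E‖ := by
    refine ContinuousLinearMap.opNorm_le_bound _ (norm_nonneg E) fun p => ?_
    rw [hΔapp]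
    calc ‖E (p.1 : X)‖ ≤ ‖E‖ * ‖(p.1 : X)‖ := E.le_opNorm _
    _ ≤ ‖E‖ * ‖p‖ := by gcongr; exact le_max_left _ _
  -- the perturbed map J + Δ is still bijective
  set a : (M × F) →L[ℂ] (M × F) := (e.symm : X →L[ℂ] (M × F)).comp Δ with ha
  have hanorm : ‖a‖ < 1 := by
    have h1 : ‖a‖ ≤ ‖(e.symm : X →L[ℂ] (M × F))‖ * ‖Δ‖ :=
      ContinuousLinearMap.opNorm_comp_le _ _
    have h2 : ‖(e.symm : X →L[ℂ] (M × F))‖ * ‖Δ‖ < 1 := by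
      have hs : (0:ℝ) ≤ ‖(e.symm : X →L[ℂ] (M × F))‖ := norm_nonneg _
      have hΔε : ‖Δ‖ < ε := lt_of_le_of_lt hΔnorm hE
      have : ‖(e.symm : X →L[ℂ] (M × F))‖ * ‖Δ‖ < (‖(e.symm : X →L[ℂ] (M × F))‖ + 1) * ε := by
        rcases eq_or_lt_of_le hs with h | h
        · rw [← h]; simpa using hεpos
        · calc ‖(e.symm : X →L[ℂ] (M × F))‖ * ‖Δ‖
              < ‖(e.symm : X →L[ℂ] (M × F))‖ * ε := by
                exact mul_lt_mul_of_pos_left hΔε h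
            _ ≤ (‖(e.symm : X →L[ℂ] (M × F))‖ + 1) * ε := by nlinarith
      have hne : (‖(e.symm : X →L[ℂ] (M × F))‖ + 1) ≠ 0 := by positivity
      rw [hε, mul_inv_cancel₀ hne] at this
      exact this
    exact lt_of_le_of_lt h1 h2
  set u : ((M × F) →L[ℂ] (M × F))ˣ := Units.oneSub (-a) (lt_of_le_of_lt (le_of_eq (norm_neg a)) hanorm) with hu
  have huval : (u : (M × F) →L[ℂ] (M × F)) = 1 + a := by
    simp [hu, Units.oneSub, sub_neg_eq_add]
  have hJ'e : ∀ p, (J + Δ) p = e ((1 + a) p) := by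
    intro p
    have : (1 + a) p = p + e.symm (Δ p) := by
      simp [ha, ContinuousLinearMap.add_apply]
    rw [this, map_add, e.apply_symm_apply, hecoe]
    exact ContinuousLinearMap.add_apply _ _ _
  have hinj : Function.Injective (J + Δ) := by
    intro p q hpq
    rw [hJ'e, hJ'e] at hpq
    have h1 : (1 + a) p = (1 + a) q := e.injective hpq
    have h2 : ∀ r : M × F, ((u⁻¹ : _ˣ) : (M × F) →L[ℂ] (M × F)) ((1 + a) r) = r := by
      intro r
      have := congrArg (fun T : (M × F) →L[ℂ] (M × F) => T r) u.inv_mul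
      simpa [huval, ContinuousLinearMap.mul_apply] using this
    rw [← h2 p, ← h2 q, h1]
  have hsurj : Function.Surjective (J + Δ) := by
    intro x
    refine ⟨((u⁻¹ : _ˣ) : (M × F) →L[ℂ] (M × F)) (e.symm x), ?_⟩
    rw [hJ'e]
    have : ((1 + a) : (M × F) →L[ℂ] (M × F)) (((u⁻¹ : _ˣ) : (M × F) →L[ℂ] (M × F)) (e.symm x))
        = e.symm x := by
      have := congrArg (fun T : (M × F) →L[ℂ] (M × F) => T (e.symm x)) u.mul_inv
      simpa [huval, ContinuousLinearMap.mul_apply] using this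
    rw [this]
    simp
  set S' := S + E with hS'
  have hJ'app : ∀ (m : M) (f : F), (J + Δ) (m, f) = S' (m : X) + (f : X) := by
    intro m f
    rw [ContinuousLinearMap.add_apply, hJapp, hΔapp]
    rw [hS', ContinuousLinearMap.add_apply]
    abel
  set f' : M →L[ℂ] X := S'.comp M.subtypeL with hf'
  have hf'app : ∀ m : M, f' m = S' (m : X) := fun m => rfl
  have hf'ker : LinearMap.ker (f' : M →ₗ[ℂ] X) = ⊥ := by
    rw [Submodule.eq_bot_iff]
    intro m hm
    have h0 : S' (m : X) = 0 := hm
    have heq : (J + Δ) (m, 0) = (J + Δ) (0, 0) := by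
      rw [hJ'app, hJ'app, h0]
      simp
    have := hinj heq
    exact congrArg Prod.fst this
  have hcompl : IsCompl (LinearMap.range (f' : M →ₗ[ℂ] X)) F := by
    constructor
    · rw [disjoint_iff_inf_le]
      intro x hx
      obtain ⟨hx1, hx2⟩ := Submodule.mem_inf.1 hx
      obtain ⟨m, hm⟩ := hx1
      have heq : (J + Δ) (m, 0) = (J + Δ) (0, ⟨x, hx2⟩) := by
        rw [hJ'app, hJ'app]
        rw [ContinuousLinearMap.coe_coe, hf'app] at hm
        simp [hm]
      have h2 := hinj heq
      have : (⟨x, hx2⟩ : F) = 0 := (congrArg Prod.snd h2).symm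
      have hx0 : x = 0 := congrArg Subtype.val this
      simp [hx0]
    · rw [codisjoint_iff]
      rw [eq_top_iff]
      intro x _
      obtain ⟨⟨m, f⟩, hmf⟩ := hsurj x
      rw [hJ'app] at hmf
      exact Submodule.mem_sup.2 ⟨S' (m : X), ⟨m, rfl⟩, (f : X), f.2, hmf⟩
  have hFclosed : IsClosed (F : Set X) := F.closed_of_finiteDimensional
  have hf'closed : IsClosed ((LinearMap.range (f' : M →ₗ[ℂ] X) : Submodule ℂ X) : Set X) :=
    f'.closed_complemented_range_of_isCompl_of_ker_eq_bot F hcompl hFclosed hf'ker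
  have hle : LinearMap.range (f' : M →ₗ[ℂ] X) ≤ LinearMap.range (S' : X →ₗ[ℂ] X) := by
    rintro x ⟨m, rfl⟩
    exact ⟨(m : X), rfl⟩
  have hrange_decomp : LinearMap.range (S' : X →ₗ[ℂ] X) =
      LinearMap.range (f' : M →ₗ[ℂ] X) ⊔ (LinearMap.range (S' : X →ₗ[ℂ] X) ⊓ F) := by
    apply le_antisymm
    · intro x hx
      have hx2 : x ∈ LinearMap.range (f' : M →ₗ[ℂ] X) ⊔ F := by rw [hcompl.sup_eq_top]; trivial
      obtain ⟨r, hr, g, hg, rfl⟩ := Submodule.mem_sup.1 hx2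
      refine Submodule.mem_sup.2 ⟨r, hr, g, Submodule.mem_inf.2 ⟨?_, hg⟩, rfl⟩
      have : g = (r + g) - r := by abel
      rw [this]
      exact Submodule.sub_mem _ hx (hle hr)
    · exact sup_le hle inf_le_left
  refine ⟨?_, ?_, ?_⟩
  · -- kernel finite dimensional
    set φ : (LinearMap.ker (S' : X →ₗ[ℂ] X)) →ₗ[ℂ] (X ⧸ M) :=
      (M.mkQ).comp (LinearMap.ker (S' : X →ₗ[ℂ] X)).subtype with hφ
    apply FiniteDimensional.of_injective φ
    rw [← LinearMap.ker_eq_bot, Submodule.eq_bot_iff]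
    intro x hx
    have hxM : (x : X) ∈ M := by
      have : M.mkQ (x : X) = 0 := hx
      rwa [Submodule.mkQ_apply, Submodule.Quotient.mk_eq_zero] at this
    have hm : (⟨(x : X), hxM⟩ : M) ∈ LinearMap.ker (f' : M →ₗ[ℂ] X) := by
      have : S' (x : X) = 0 := x.2
      exact this
    rw [hf'ker, Submodule.mem_bot] at hm
    have hx0 : (x : X) = 0 := congrArg Subtype.val hm
    exact Subtype.ext hx0
  · -- closed range
    rw [hrange_decomp]
    haveI : FiniteDimensional ℂ (LinearMap.range (S' : X →ₗ[ℂ] X) ⊓ F : Submodule ℂ X) :=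
      Submodule.finiteDimensional_of_le inf_le_right
    exact isClosed_sup_fd _ _ hf'closed
  · -- finite dimensional cokernel
    haveI : FiniteDimensional ℂ (X ⧸ LinearMap.range (f' : M →ₗ[ℂ] X)) :=
      (Submodule.quotientEquivOfIsCompl _ _ hcompl).symm.finiteDimensional
    refine FiniteDimensional.of_surjective
      (Submodule.mapQ (LinearMap.range (f' : M →ₗ[ℂ] X)) (LinearMap.range (S' : X →ₗ[ℂ] X)) LinearMap.id hle) ?_
    intro z
    obtain ⟨y, rfl⟩ := Submodule.Quotient.mk_surjective _ z
    exact ⟨Submodule.Quotient.mk y, by rw [Submodule.mapQ_apply]; rfl⟩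

lemma sigma_a_subset_spectrum (T : X →L[ℂ] X) : sigma_a T ⊆ spectrum ℂ T := by
  intro l hl
  by_contra hns
  apply hl
  have := spectrum.notMem_iff.1 hns
  have hU : IsUnit (T - l • 1) := by
    have h2 : T - l • 1 = -((algebraMap ℂ (X →L[ℂ] X)) l - T) := by
      rw [Algebra.algebraMap_eq_smul_one]
      abel
    rw [h2]
    exact this.neg
  obtain ⟨B, hB⟩ := hU.exists_left_inv
  refine ⟨(‖B‖ + 1)⁻¹, by positivity, fun x => ?_⟩
  have hx : x = B ((T - l • 1) x) := by
    have := congrArg (fun f : X →L[ℂ] X => f x) hB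
    simpa [ContinuousLinearMap.mul_apply] using this.symm
  have h1 : ‖x‖ ≤ ‖B‖ * ‖(T - l • 1) x‖ := by
    calc ‖x‖ = ‖B ((T - l • 1) x)‖ := by rw [← hx]
    _ ≤ ‖B‖ * ‖(T - l • 1) x‖ := B.le_opNorm _
  have hpos : (0:ℝ) < ‖B‖ + 1 := by positivity
  rw [inv_mul_le_iff₀ hpos] -- (‖B‖+1)⁻¹ * ‖x‖ ≤ ‖(T-l)x‖ ↔ ‖x‖ ≤ (‖B‖+1) * ‖(T-l)x‖ ?
  nlinarith [norm_nonneg ((T - l • 1) x)]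

lemma eig_mem_sigma_a (T : X →L[ℂ] X) {l : ℂ} (h : LinearMap.ker ((T - l • 1 : X →L[ℂ] X) : X →ₗ[ℂ] X) ≠ ⊥) :
    l ∈ sigma_a T := by
  obtain ⟨x, hx, hx0⟩ := Submodule.exists_mem_ne_zero_of_ne_bot h
  rintro ⟨c, hc, hcb⟩
  have h0 : (T - l • 1) x = 0 := hx
  have := hcb x
  rw [h0, norm_zero] at this
  have : ‖x‖ ≤ 0 := by nlinarith
  exact hx0 (norm_le_zero_iff.1 this)

lemma Eset0_subset_Ea0 (T : X →L[ℂ] X) : Eset0 T ⊆ Ea0 T := by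
  rintro l ⟨⟨hmem, hacc⟩, hk, hfd⟩
  refine ⟨⟨eig_mem_sigma_a T hk, fun hacc' => hacc ?_⟩, hk, hfd⟩
  exact hacc'.mono (Filter.principal_mono.2 (sigma_a_subset_spectrum T))

/-- `T ∈ (aw_e)` iff `T ∈ (W_e)` and `E⁰(T) = E_a⁰(T)`. -/
theorem stmt15 (T : X →L[ℂ] X) :
    spectrum ℂ T \ sigma_e T = Ea0 T ↔
      spectrum ℂ T \ sigma_e T = Eset0 T ∧ Eset0 T = Ea0 T := by
  constructor
  · intro h
    have key : Eset0 T = Ea0 T := by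
      apply Set.Subset.antisymm (Eset0_subset_Ea0 T)
      intro l hl
      obtain ⟨⟨hla, hlacc⟩, hk, hfd⟩ := hl
      have hlmem : l ∈ spectrum ℂ T \ sigma_e T := by
        rw [h]; exact ⟨⟨hla, hlacc⟩, hk, hfd⟩
      obtain ⟨hlsp, hlne⟩ := hlmem
      have hfred : IsFredholm (T - l • 1) := not_not.1 hlne
      obtain ⟨ε₁, hε₁, hstab⟩ := fredholm_stability _ hfred
      rw [accPt_iff_nhds] at hlacc
      push_neg at hlacc
      obtain ⟨U, hU, hUprop⟩ := hlacc
      obtain ⟨ε₂, hε₂, hball⟩ := Metric.mem_nhds_iff.1 hU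
      refine ⟨⟨hlsp, ?_⟩, hk, hfd⟩
      rw [accPt_iff_nhds]
      push_neg
      refine ⟨Metric.ball l (min ε₁ ε₂), Metric.ball_mem_nhds _ (lt_min hε₁ hε₂), ?_⟩
      rintro y ⟨hy1, hy2⟩
      by_contra hyne
      have hdist : dist y l < min ε₁ ε₂ := hy1
      have hy_not_a : y ∉ sigma_a T := by
        intro hya
        exact hyne (hUprop y ⟨hball (lt_of_lt_of_le hdist (min_le_right _ _)), hya⟩)
      have hyfred : IsFredholm (T - y • 1) := by
        have heq : T - y • 1 = (T - l • 1) + ((l - y) • 1) := by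
          rw [sub_smul]; abel
        rw [heq]
        apply hstab
        calc ‖(l - y) • (1 : X →L[ℂ] X)‖ ≤ ‖l - y‖ * ‖(1 : X →L[ℂ] X)‖ := ContinuousLinearMap.opNorm_smul_le _ _
          _ ≤ ‖l - y‖ * 1 := by
              gcongr
              rw [ContinuousLinearMap.one_def]
              exact ContinuousLinearMap.norm_id_le
          _ = ‖l - y‖ := mul_one _
          _ < ε₁ := by
              rw [norm_sub_rev, ← dist_eq_norm]
              exact lt_of_lt_of_le hdist (min_le_left _ _)
      have hymem : y ∈ spectrum ℂ T \ sigma_e T := ⟨hy2, fun hn => hn hyfred⟩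
      rw [h] at hymem
      exact hy_not_a hymem.1.1
    exact ⟨h.trans key.symm, key⟩
  · rintro ⟨h1, h2⟩
    exact h1.trans h2
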